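/- arXiv:1512.02623 — 2 statements merged into one kernel-verified Lean document; each statement's English description precedes it below -/
import Mathlib

section
/- Let X be a complex Banach space, T a bounded linear operator on X, and S a generalized Drazin inverse of T (i.e., ST = TS, STS = S, and TST − T is quasinilpotent). Then T has Dunford's property (C) if and only if S has Dunford's property (C). -/
open Filter Topology Set

namespace Paper

variable {Y : Type*} [NormedAddCommGroup Y] [NormedSpace ℂ Y]

/-- A bounded operator `A` is quasinilpotent if `‖Aⁿ‖^(1/n) → 0`. -/
def IsQuasinilpotent (A : Y →L[ℂ] Y) : Prop :=
  Tendsto (fun n : ℕ => ‖A ^ n‖ ^ (1 / (n : ℝ))) atTop (nhds (0 : ℝ))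

/-- `A` is semi-regular if its range is closed and `ker (Aⁿ) ⊆ ran A` for all `n`. -/
def SemiRegular (A : Y →L[ℂ] Y) : Prop :=
  IsClosed (Set.range A) ∧ ∀ n : ℕ, ∀ x : Y, (A ^ n) x = 0 → x ∈ Set.range A

/-- `A` has the single-valued extension property at `l0`. -/
def HasSVEPAt (A : Y →L[ℂ] Y) (l0 : ℂ) : Prop :=
  ∀ U : Set ℂ, IsOpen U → l0 ∈ U → ∀ f : ℂ → Y, AnalyticOnNhd ℂ f U →
    (∀ l ∈ U, l • f l - A (f l) = 0) → ∀ l ∈ U, f l = 0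

/-- `A` has the single-valued extension property (at every point). -/
def HasSVEP (A : Y →L[ℂ] Y) : Prop := ∀ l : ℂ, HasSVEPAt A l

/-- `A` is bounded below: injective with closed range. -/
def BoundedBelow (A : Y →L[ℂ] Y) : Prop :=
  Function.Injective A ∧ IsClosed (Set.range A)

variable {X : Type*} [NormedAddCommGroup X] [NormedSpace ℂ X] [CompleteSpace X]

/-- The quasinilpotent part `H₀(T)` of `T`. -/
def quasinilpotentPart (T : X →L[ℂ] X) : Set X :=
  {x : X | Tendsto (fun n : ℕ => ‖(T ^ n) x‖ ^ (1 / (n : ℝ))) atTop (nhds (0 : ℝ))}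

/-- The analytic core `K(T)` of `T`. -/
def analyticCore (T : X →L[ℂ] X) : Set X :=
  {x : X | ∃ (u : ℕ → X) (δ : ℝ), 0 < δ ∧ T (u 1) = x ∧
    (∀ n : ℕ, 1 ≤ n → T (u (n + 1)) = u n) ∧ (∀ n : ℕ, 1 ≤ n → ‖u n‖ ≤ δ ^ n * ‖x‖)}

/-- Restriction of `T` to an invariant subspace `M`, as a continuous linear operator on `M`. -/
def restrictCLM (T : X →L[ℂ] X) (M : Submodule ℂ X) (h : ∀ x ∈ M, T x ∈ M) : M →L[ℂ] M :=
  { toLinearMap := (T : X →ₗ[ℂ] X).restrict h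
    cont := (T.continuous.comp continuous_subtype_val).subtype_mk _ }

/-- `(M, N)` is a generalized Kato decomposition of `T`. -/
structure IsGKD (T : X →L[ℂ] X) (M N : Submodule ℂ X) : Prop where
  closedM : IsClosed (M : Set X)
  closedN : IsClosed (N : Set X)
  invM : ∀ x ∈ M, T x ∈ M
  invN : ∀ x ∈ N, T x ∈ N
  compl : IsCompl M N
  semiregM : SemiRegular (restrictCLM T M invM)
  quasiN : IsQuasinilpotent (restrictCLM T N invN)

/-- `T` admits a generalized Kato decomposition. -/
def HasGKD (T : X →L[ℂ] X) : Prop := ∃ M N : Submodule ℂ X, IsGKD T M N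

/-- `T` is left generalized Drazin invertible. -/
def LeftGDInvertible (T : X →L[ℂ] X) : Prop :=
  IsClosed (quasinilpotentPart T) ∧
  ∃ M : Submodule ℂ X, IsClosed (M : Set X) ∧ (∀ x ∈ M, T x ∈ M) ∧
    IsClosed (T '' (M : Set X)) ∧
    (M : Set X) ∩ quasinilpotentPart T = {0} ∧
    (∀ x : X, ∃ m ∈ M, ∃ h ∈ quasinilpotentPart T, x = m + h)

/-- `T` is right generalized Drazin invertible. -/
def RightGDInvertible (T : X →L[ℂ] X) : Prop :=
  IsClosed (analyticCore T) ∧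
  ∃ N : Submodule ℂ X, IsClosed (N : Set X) ∧ (∀ x ∈ N, T x ∈ N) ∧
    (N : Set X) ⊆ quasinilpotentPart T ∧
    analyticCore T ∩ (N : Set X) = {0} ∧
    (∀ x : X, ∃ k ∈ analyticCore T, ∃ h ∈ N, x = k + h)

/-- The approximate point spectrum. -/
def sigmaAp (T : X →L[ℂ] X) : Set ℂ :=
  {l : ℂ | ¬ BoundedBelow (l • ContinuousLinearMap.id ℂ X - T)}

/-- The surjective spectrum. -/
def sigmaSu (T : X →L[ℂ] X) : Set ℂ :=
  {l : ℂ | ¬ Function.Surjective (l • ContinuousLinearMap.id ℂ X - T)}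

/-- The left generalized Drazin spectrum. -/
def sigmaLgD (T : X →L[ℂ] X) : Set ℂ :=
  {l : ℂ | ¬ LeftGDInvertible (l • ContinuousLinearMap.id ℂ X - T)}

/-- The right generalized Drazin spectrum. -/
def sigmaRgD (T : X →L[ℂ] X) : Set ℂ :=
  {l : ℂ | ¬ RightGDInvertible (l • ContinuousLinearMap.id ℂ X - T)}

/-- The generalized Kato spectrum. -/
def sigmaGK (T : X →L[ℂ] X) : Set ℂ :=
  {l : ℂ | ¬ HasGKD (l • ContinuousLinearMap.id ℂ X - T)}

/-- The set of points where `T` fails to have the SVEP. -/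
def svepFailSet (T : X →L[ℂ] X) : Set ℂ := {l : ℂ | ¬ HasSVEPAt T l}

/-- The adjoint `T*` of `T`, acting on the dual space, `(T* φ) x = φ (T x)`. -/
noncomputable def adjointDual (T : X →L[ℂ] X) :
    StrongDual ℂ X →L[ℂ] StrongDual ℂ X :=
  (ContinuousLinearMap.compL ℂ X X ℂ).flip T

/-- The local resolvent set of `T` at `x`. -/
def localResolvent (T : X →L[ℂ] X) (x : X) : Set ℂ :=
  ⋃₀ {U : Set ℂ | IsOpen U ∧ ∃ f : ℂ → X, AnalyticOnNhd ℂ f U ∧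
      ∀ l ∈ U, l • f l - T (f l) = x}

/-- The local spectrum of `T` at `x`. -/
def localSpectrum (T : X →L[ℂ] X) (x : X) : Set ℂ := (localResolvent T x)ᶜ

/-- The local spectral subspace `X_T(Ω)`. -/
def localSpectralSubspace (T : X →L[ℂ] X) (Ω : Set ℂ) : Set X :=
  {x : X | localSpectrum T x ⊆ Ω}

/-- Dunford's property `(C)`. -/
def HasPropertyC (T : X →L[ℂ] X) : Prop :=
  ∀ Ω : Set ℂ, IsClosed Ω → IsClosed (localSpectralSubspace T Ω)

/-- Bishop's property `(β)`. -/
def HasPropertyBeta (T : X →L[ℂ] X) : Prop :=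
  ∀ U : Set ℂ, IsOpen U → ∀ f : ℕ → ℂ → X, (∀ n, AnalyticOnNhd ℂ (f n) U) →
    (∀ K : Set ℂ, K ⊆ U → IsCompact K →
      TendstoUniformlyOn (fun n l => l • f n l - T (f n l)) (fun _ => 0) atTop K) →
    ∀ K : Set ℂ, K ⊆ U → IsCompact K →
      TendstoUniformlyOn (fun n l => f n l) (fun _ => 0) atTop K

/-- `S` is a generalized Drazin inverse of `T`. -/
def IsGDInverse (T S : X →L[ℂ] X) : Prop :=
  S * T = T * S ∧ S * T * S = S ∧ IsQuasinilpotent (T * S * T - T)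


section GDAux

set_option linter.unusedSectionVars false
set_option linter.unusedVariables false

variable {T S : X →L[ℂ] X}

lemma gd_Sp (hs : S * T * S = S) : S * (T * S) = S := by rw [← mul_assoc]; exact hs

lemma gd_pS (hc : S * T = T * S) (hs : S * T * S = S) : (T * S) * S = S := by
  rw [← hc]; exact hs

lemma gd_idem (hs : S * T * S = S) : (T * S) * (T * S) = T * S := by
  rw [mul_assoc, gd_Sp hs]

lemma gd_comm_pT (hc : S * T = T * S) : T * (T * S) = (T * S) * T := by
  rw [← hc, ← mul_assoc, hc]

lemma gd_BpB (hc : S * T = T * S) (hs : S * T * S = S) :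
    (T * S * T) * (T * S) = T * (T * S) := by
  rw [mul_assoc (T*S) T (T*S), gd_comm_pT hc, ← mul_assoc, gd_idem hs]

lemma gd_Qp (hc : S * T = T * S) (hs : S * T * S = S) : (T * S * T - T) * (T * S) = 0 := by
  rw [sub_mul, gd_BpB hc hs, sub_self]

lemma gd_pQ (hc : S * T = T * S) (hs : S * T * S = S) : (T * S) * (T * S * T - T) = 0 := by
  rw [mul_sub, ← mul_assoc, gd_idem hs, sub_self]

lemma gd_SB (hc : S * T = T * S) (hs : S * T * S = S) : S * (T * S * T) = T * S := by
  rw [← mul_assoc, gd_Sp hs, hc]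

lemma gd_pB (hc : S * T = T * S) (hs : S * T * S = S) :
    (T * S) * (T * S * T) = T * S * T := by
  rw [← mul_assoc, gd_idem hs]

lemma gd_sr_zero {Q : X →L[ℂ] X} (hq : IsQuasinilpotent Q) : spectralRadius ℂ Q = 0 := by
  have h := spectrum.pow_norm_pow_one_div_tendsto_nhds_spectralRadius Q
  have h2 : Tendsto (fun n : ℕ => ENNReal.ofReal (‖Q ^ n‖ ^ (1 / (n : ℝ)))) atTop
      (𝓝 (ENNReal.ofReal 0)) := (ENNReal.continuous_ofReal.tendsto 0).comp hq
  simpa using tendsto_nhds_unique h h2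

lemma gd_isUnit_smul_one_add {Q : X →L[ℂ] X} (hq : IsQuasinilpotent Q) {k : ℂ} (hk : k ≠ 0) :
    IsUnit (k • (1 : X →L[ℂ] X) + Q) := by
  have h1 : (-k) ∈ resolventSet ℂ Q := by
    apply spectrum.mem_resolventSet_of_spectralRadius_lt
    rw [gd_sr_zero hq]
    simpa [pos_iff_ne_zero] using hk
  rw [spectrum.mem_resolventSet_iff] at h1
  have h3 : k • (1 : X →L[ℂ] X) + Q = -(algebraMap ℂ (X →L[ℂ] X) (-k) - Q) := by
    rw [Algebra.algebraMap_eq_smul_one, neg_sub, neg_smul, sub_neg_eq_add, add_comm]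
  rw [h3]
  exact h1.neg

lemma gd_isUnit_one_add_smul {Q : X →L[ℂ] X} (hq : IsQuasinilpotent Q) (z : ℂ) :
    IsUnit ((1 : X →L[ℂ] X) + z • Q) := by
  by_cases hz : z = 0
  · simp [hz]
  · have h1 : IsUnit (z • (1 : X →L[ℂ] X)) := by
      rw [← Algebra.algebraMap_eq_smul_one]
      exact (isUnit_iff_ne_zero.mpr hz).map (algebraMap ℂ (X →L[ℂ] X))
    have h2 := h1.mul (gd_isUnit_smul_one_add hq (inv_ne_zero hz))
    have h3 : (z • (1 : X →L[ℂ] X)) * (z⁻¹ • (1 : X →L[ℂ] X) + Q)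
        = (1 : X →L[ℂ] X) + z • Q := by
      rw [smul_mul_assoc, one_mul, smul_add, smul_smul, mul_inv_cancel₀ hz, one_smul]
    rwa [h3] at h2

lemma gd_comm_ringInverse {M₀ : Type*} [MonoidWithZero M₀] {a b : M₀} (h : Commute a b) :
    Commute a (Ring.inverse b) := by
  by_cases hb : IsUnit b
  · obtain ⟨u, rfl⟩ := hb
    rw [Ring.inverse_unit]
    exact h.units_inv_right
  · rw [Ring.inverse_non_unit _ hb]
    exact Commute.zero_right a

lemma gd_mem_localResolvent_iff {T : X →L[ℂ] X} {x : X} {l : ℂ} :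
    l ∈ localResolvent T x ↔ ∃ U : Set ℂ, IsOpen U ∧ l ∈ U ∧ ∃ f : ℂ → X,
      AnalyticOnNhd ℂ f U ∧ ∀ μ ∈ U, μ • f μ - T (f μ) = x := by
  constructor
  · rintro ⟨U, ⟨hU, f, hf, hfe⟩, hl⟩
    exact ⟨U, hU, hl, f, hf, hfe⟩
  · rintro ⟨U, hU, hl, f, hf, hfe⟩
    exact ⟨U, ⟨hU, f, hf, hfe⟩, hl⟩


lemma gd_apply_eq {A B : X →L[ℂ] X} (h : A = B) (y : X) : A y = B y := by rw [h]

lemma gd_zero_mem_T (hc : S * T = T * S) (hs : S * T * S = S) {x : X} (hx : T (S x) = x) :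
    (0 : ℂ) ∈ localResolvent T x := by
  rw [gd_mem_localResolvent_iff]
  have hrpos : (0 : ℝ) < (‖S‖ + 1)⁻¹ := by positivity
  have hu : ∀ l : ℂ, l ∈ Metric.ball (0 : ℂ) (‖S‖ + 1)⁻¹ →
      IsUnit ((1 : X →L[ℂ] X) - l • S) := by
    intro l hl
    rw [Metric.mem_ball, dist_zero_right] at hl
    have hn : ‖l • S‖ < 1 := by
      calc ‖l • S‖ = ‖l‖ * ‖S‖ := norm_smul l S
        _ ≤ ‖l‖ * (‖S‖ + 1) := by
            apply mul_le_mul_of_nonneg_left (by linarith) (norm_nonneg l)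
        _ < (‖S‖ + 1)⁻¹ * (‖S‖ + 1) := by
            apply mul_lt_mul_of_pos_right hl (by positivity)
        _ = 1 := by
            rw [inv_mul_cancel₀ (by positivity)]
    exact (Units.oneSub _ hn).isUnit
  refine ⟨Metric.ball 0 (‖S‖ + 1)⁻¹, Metric.isOpen_ball, Metric.mem_ball_self hrpos,
    fun l => -(S ((Ring.inverse ((1 : X →L[ℂ] X) - l • S)) x)), ?_, ?_⟩
  · apply DifferentiableOn.analyticOnNhd _ Metric.isOpen_ball
    intro l hl
    apply DifferentiableAt.differentiableWithinAt
    have h1 : DifferentiableAt ℂ (fun l : ℂ => Ring.inverse ((1 : X →L[ℂ] X) - l • S)) l :=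
      DifferentiableAt.comp (g := Ring.inverse) l (differentiableAt_inverse (𝕜 := ℂ) (hu l hl))
        ((differentiable_id.smul_const S).const_sub 1).differentiableAt
    exact (S.differentiableAt.comp l (h1.clm_apply (differentiableAt_const x))).neg
  · intro l hl
    have h2 : ((1 : X →L[ℂ] X) - l • S) ((Ring.inverse ((1 : X →L[ℂ] X) - l • S)) x) = x := by
      have h3 := gd_apply_eq (Ring.mul_inverse_cancel _ (hu l hl)) x
      simpa [ContinuousLinearMap.mul_apply] using h3
    have hkey : (T * S) - l • S = (T * S) * ((1 : X →L[ℂ] X) - l • S) := by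
      rw [mul_sub, mul_one, mul_smul_comm, gd_pS hc hs]
    calc l • -(S ((Ring.inverse ((1 : X →L[ℂ] X) - l • S)) x))
          - T (-(S ((Ring.inverse ((1 : X →L[ℂ] X) - l • S)) x)))
        = ((T * S) - l • S) ((Ring.inverse ((1 : X →L[ℂ] X) - l • S)) x) := by
          simp only [ContinuousLinearMap.sub_apply, ContinuousLinearMap.smul_apply,
            ContinuousLinearMap.mul_apply, map_neg, smul_neg]
          abel
      _ = ((T * S) * ((1 : X →L[ℂ] X) - l • S)) ((Ring.inverse ((1 : X →L[ℂ] X) - l • S)) x) := by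
          rw [← hkey]
      _ = x := by rw [ContinuousLinearMap.mul_apply, h2, ContinuousLinearMap.mul_apply, hx]


lemma gd_zero_mem_S (hc : S * T = T * S) (hs : S * T * S = S) {x : X} (hx : T (S x) = x) :
    (0 : ℂ) ∈ localResolvent S x := by
  rw [gd_mem_localResolvent_iff]
  set B : X →L[ℂ] X := T * S * T with hB
  have hrpos : (0 : ℝ) < (‖B‖ + 1)⁻¹ := by positivity
  have hu : ∀ l : ℂ, l ∈ Metric.ball (0 : ℂ) (‖B‖ + 1)⁻¹ →
      IsUnit ((1 : X →L[ℂ] X) - l • B) := by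
    intro l hl
    rw [Metric.mem_ball, dist_zero_right] at hl
    have hn : ‖l • B‖ < 1 := by
      calc ‖l • B‖ = ‖l‖ * ‖B‖ := norm_smul l B
        _ ≤ ‖l‖ * (‖B‖ + 1) := by
            apply mul_le_mul_of_nonneg_left (by linarith) (norm_nonneg l)
        _ < (‖B‖ + 1)⁻¹ * (‖B‖ + 1) := by
            apply mul_lt_mul_of_pos_right hl (by positivity)
        _ = 1 := by
            rw [inv_mul_cancel₀ (by positivity)]
    exact (Units.oneSub _ hn).isUnit
  refine ⟨Metric.ball 0 (‖B‖ + 1)⁻¹, Metric.isOpen_ball, Metric.mem_ball_self hrpos,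
    fun l => -(B ((Ring.inverse ((1 : X →L[ℂ] X) - l • B)) x)), ?_, ?_⟩
  · apply DifferentiableOn.analyticOnNhd _ Metric.isOpen_ball
    intro l hl
    apply DifferentiableAt.differentiableWithinAt
    have h1 : DifferentiableAt ℂ (fun l : ℂ => Ring.inverse ((1 : X →L[ℂ] X) - l • B)) l :=
      DifferentiableAt.comp (g := Ring.inverse) l (differentiableAt_inverse (𝕜 := ℂ) (hu l hl))
        ((differentiable_id.smul_const B).const_sub 1).differentiableAt
    exact (B.differentiableAt.comp l (h1.clm_apply (differentiableAt_const x))).neg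
  · intro l hl
    have h2 : ((1 : X →L[ℂ] X) - l • B) ((Ring.inverse ((1 : X →L[ℂ] X) - l • B)) x) = x := by
      have h3 := gd_apply_eq (Ring.mul_inverse_cancel _ (hu l hl)) x
      simpa [ContinuousLinearMap.mul_apply] using h3
    have hSB : S * B = T * S := gd_SB hc hs
    have hkey : (T * S) - l • B = (T * S) * ((1 : X →L[ℂ] X) - l • B) := by
      rw [mul_sub, mul_one, mul_smul_comm, gd_pB hc hs]
    calc l • -(B ((Ring.inverse ((1 : X →L[ℂ] X) - l • B)) x))
          - S (-(B ((Ring.inverse ((1 : X →L[ℂ] X) - l • B)) x)))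
        = ((S * B) - l • B) ((Ring.inverse ((1 : X →L[ℂ] X) - l • B)) x) := by
          simp only [ContinuousLinearMap.sub_apply, ContinuousLinearMap.smul_apply,
            ContinuousLinearMap.mul_apply, map_neg, smul_neg]
          abel
      _ = ((T * S) * ((1 : X →L[ℂ] X) - l • B)) ((Ring.inverse ((1 : X →L[ℂ] X) - l • B)) x) := by
          rw [hSB, ← hkey]
      _ = x := by rw [ContinuousLinearMap.mul_apply, h2, ContinuousLinearMap.mul_apply, hx]


lemma gd_inv_mem_S (hc : S * T = T * S) (hs : S * T * S = S) {x : X} {l : ℂ} (hl0 : l ≠ 0)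
    (hl : l ∈ localResolvent T x) : l⁻¹ ∈ localResolvent S x := by
  rw [gd_mem_localResolvent_iff] at hl ⊢
  obtain ⟨U, hU, hlU, f, hf, hfe⟩ := hl
  have hV : IsOpen {μ : ℂ | μ ≠ 0 ∧ μ⁻¹ ∈ U} := by
    have h1 : {μ : ℂ | μ ≠ 0 ∧ μ⁻¹ ∈ U} = {(0 : ℂ)}ᶜ ∩ Inv.inv ⁻¹' U := by
      ext μ
      simp [Set.mem_setOf_eq]
    rw [h1]
    exact continuousOn_inv₀.isOpen_inter_preimage isOpen_compl_singleton hU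
  refine ⟨{μ : ℂ | μ ≠ 0 ∧ μ⁻¹ ∈ U}, hV, ⟨inv_ne_zero hl0, by rw [inv_inv]; exact hlU⟩,
    fun μ => μ⁻¹ • (x - T (S x)) - μ⁻¹ • ((T * S * T) (f μ⁻¹)), ?_, ?_⟩
  · apply DifferentiableOn.analyticOnNhd _ hV
    rintro μ ⟨hμ0, hμU⟩
    apply DifferentiableAt.differentiableWithinAt
    have hinv : DifferentiableAt ℂ (fun μ : ℂ => μ⁻¹) μ := differentiableAt_inv hμ0
    have hcomp : DifferentiableAt ℂ (fun μ : ℂ => f μ⁻¹) μ :=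
      (hf _ hμU).differentiableAt.comp μ hinv
    exact (hinv.smul (differentiableAt_const (x - T (S x)))).sub
      (hinv.smul ((T * S * T).differentiableAt.comp μ hcomp))
  · rintro μ ⟨hμ0, hμU⟩
    have hfel := hfe μ⁻¹ hμU
    have eS1 : S (T (S x)) = S x := by
      have := gd_apply_eq (gd_Sp hs) x
      simpa [ContinuousLinearMap.mul_apply] using this
    have eS2 : S (T (S (T (f μ⁻¹)))) = T (S (f μ⁻¹)) := by
      have := gd_apply_eq (gd_SB hc hs) (f μ⁻¹)
      simpa [ContinuousLinearMap.mul_apply] using this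
    have e4 : T (S x) = μ⁻¹ • T (S (f μ⁻¹)) - T (S (T (f μ⁻¹))) := by
      rw [← hfel]
      simp [map_sub, map_smul]
    simp only [ContinuousLinearMap.mul_apply, map_sub, map_smul, smul_sub, smul_smul,
      mul_inv_cancel₀ hμ0, one_smul, eS1, eS2]
    rw [e4]
    abel


lemma gd_pfix_of_zero_mem_S (hc : S * T = T * S) (hs : S * T * S = S) {x : X}
    (h0 : (0 : ℂ) ∈ localResolvent S x) : T (S x) = x := by
  rw [gd_mem_localResolvent_iff] at h0
  obtain ⟨U, hU, hU0, g, hg, hge⟩ := h0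
  have he := hge 0 hU0
  rw [zero_smul, zero_sub] at he
  have e1 : T (S (S (g 0))) = S (g 0) := by
    have := gd_apply_eq (gd_pS hc hs) (g 0)
    simpa [ContinuousLinearMap.mul_apply] using this
  calc T (S x) = T (S (-S (g 0))) := by rw [he]
    _ = -(T (S (S (g 0)))) := by simp
    _ = -(S (g 0)) := by rw [e1]
    _ = x := he

lemma gd_inv_mem_T (hc : S * T = T * S) (hs : S * T * S = S)
    (hq : IsQuasinilpotent (T * S * T - T)) {x : X} {l : ℂ} (hl0 : l ≠ 0)
    (hl : l ∈ localResolvent S x) : l⁻¹ ∈ localResolvent T x := by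
  rw [gd_mem_localResolvent_iff] at hl ⊢
  obtain ⟨U, hU, hlU, g, hg, hge⟩ := hl
  set Q : X →L[ℂ] X := T * S * T - T with hQ
  set n : X := x - T (S x) with hn
  have hV : IsOpen {μ : ℂ | μ ≠ 0 ∧ μ⁻¹ ∈ U} := by
    have h1 : {μ : ℂ | μ ≠ 0 ∧ μ⁻¹ ∈ U} = {(0 : ℂ)}ᶜ ∩ Inv.inv ⁻¹' U := by
      ext μ
      simp [Set.mem_setOf_eq]
    rw [h1]
    exact continuousOn_inv₀.isOpen_inter_preimage isOpen_compl_singleton hU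
  have huQ : ∀ μ : ℂ, μ ≠ 0 → IsUnit (μ • (1 : X →L[ℂ] X) + Q) := fun μ hμ =>
    gd_isUnit_smul_one_add hq hμ
  refine ⟨{μ : ℂ | μ ≠ 0 ∧ μ⁻¹ ∈ U}, hV, ⟨inv_ne_zero hl0, by rw [inv_inv]; exact hlU⟩,
    fun μ => -(μ⁻¹ • S (g μ⁻¹)) + (Ring.inverse (μ • (1 : X →L[ℂ] X) + Q)) n, ?_, ?_⟩
  · apply DifferentiableOn.analyticOnNhd _ hV
    rintro μ ⟨hμ0, hμU⟩
    apply DifferentiableAt.differentiableWithinAt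
    have hinv : DifferentiableAt ℂ (fun μ : ℂ => μ⁻¹) μ := differentiableAt_inv hμ0
    have hcomp : DifferentiableAt ℂ (fun μ : ℂ => g μ⁻¹) μ :=
      (hg _ hμU).differentiableAt.comp μ hinv
    have h1 : DifferentiableAt ℂ (fun μ : ℂ => Ring.inverse (μ • (1 : X →L[ℂ] X) + Q)) μ :=
      DifferentiableAt.comp (g := Ring.inverse) μ (differentiableAt_inverse (𝕜 := ℂ) (huQ μ hμ0))
        ((differentiable_id.smul_const (1 : X →L[ℂ] X)).add_const Q).differentiableAt
    exact ((hinv.smul (S.differentiableAt.comp μ hcomp)).neg).add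
      (h1.clm_apply (differentiableAt_const n))
  · rintro μ ⟨hμ0, hμU⟩
    have hgel := hge μ⁻¹ hμU
    set u : X := (Ring.inverse (μ • (1 : X →L[ℂ] X) + Q)) n with hu
    set y : X := g μ⁻¹ with hy
    -- p u = 0
    have hcomm : Commute ((T * S : X →L[ℂ] X)) (μ • (1 : X →L[ℂ] X) + Q) := by
      unfold Commute SemiconjBy
      rw [mul_add, add_mul, mul_smul_comm, smul_mul_assoc, mul_one, one_mul,
        gd_pQ hc hs, gd_Qp hc hs]
    have hpu : (T * S) u = 0 := by
      have h2 := gd_apply_eq (gd_comm_ringInverse hcomm) n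
      simp only [ContinuousLinearMap.mul_apply] at h2
      have h4 := gd_apply_eq (gd_idem hs) x
      simp only [ContinuousLinearMap.mul_apply] at h4
      have h3 : T (S n) = 0 := by
        simp [hn, map_sub, h4]
      rw [ContinuousLinearMap.mul_apply, hu, h2, h3, map_zero]
    have hpu' : T (S u) = 0 := by
      rw [← ContinuousLinearMap.mul_apply]; exact hpu
    have hTu : T u = -(Q u) := by
      have h6 := gd_apply_eq (gd_comm_pT hc) u
      simp only [ContinuousLinearMap.mul_apply] at h6
      have h5 : T (S (T u)) = 0 := by
        rw [← h6, hpu', map_zero]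
      have h7 : Q u = T (S (T u)) - T u := by
        rw [hQ]
        simp [ContinuousLinearMap.sub_apply, ContinuousLinearMap.mul_apply]
      rw [h7, h5]
      abel
    have hQu : μ • u + Q u = n := by
      have h7 := gd_apply_eq (Ring.mul_inverse_cancel _ (huQ μ hμ0)) n
      simpa [ContinuousLinearMap.mul_apply, ContinuousLinearMap.add_apply,
        ContinuousLinearMap.smul_apply, hu] using h7
    have hSy : S (T (S y)) = S y := by
      have := gd_apply_eq (gd_Sp hs) y
      simpa [ContinuousLinearMap.mul_apply] using this
    have ep : T (S (S y)) = S y := by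
      have := gd_apply_eq (gd_pS hc hs) y
      simpa [ContinuousLinearMap.mul_apply] using this
    have h1p : μ⁻¹ • y - μ⁻¹ • T (S y) = n := by
      have h8 : T (S (μ⁻¹ • y - S y)) = T (S x) := by rw [hgel]
      simp only [map_sub, map_smul] at h8
      rw [ep] at h8
      rw [hn, ← h8, ← hgel]
      abel
    have h1p' : μ⁻¹ • T (S y) = μ⁻¹ • y - n := by
      rw [← h1p]; abel
    have hSy2 : S y = μ⁻¹ • y - x := by
      rw [← hgel]; abel
    have hB : μ • u - T u = n := by
      rw [hTu, sub_neg_eq_add]; exact hQu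
    have hA : μ • (-(μ⁻¹ • S y)) - T (-(μ⁻¹ • S y)) = x - n := by
      rw [smul_neg, smul_smul, mul_inv_cancel₀ hμ0, one_smul, map_neg, map_smul,
        sub_neg_eq_add, h1p', hSy2]
      abel
    calc μ • (-(μ⁻¹ • S (g μ⁻¹)) + u) - T (-(μ⁻¹ • S (g μ⁻¹)) + u)
        = (μ • (-(μ⁻¹ • S y)) - T (-(μ⁻¹ • S y))) + (μ • u - T u) := by
          rw [smul_add, map_add, hy]
          abel
      _ = (x - n) + n := by rw [hA, hB]
      _ = x := by abel

lemma gd_pfix_of_zero_mem_T (hc : S * T = T * S) (hs : S * T * S = S)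
    (hq : IsQuasinilpotent (T * S * T - T)) {x : X}
    (h0 : (0 : ℂ) ∈ localResolvent T x) : T (S x) = x := by
  rw [gd_mem_localResolvent_iff] at h0
  obtain ⟨U, hU, hU0, f, hf, hfe⟩ := h0
  set Q : X →L[ℂ] X := T * S * T - T with hQ
  set n : X := x - T (S x) with hn
  set v : ℂ → X := fun l => f l - T (S (f l)) with hv
  -- the key pointwise identity
  have claim1 : ∀ l ∈ U, l • v l + Q (v l) = n := by
    intro l hl
    have he := hfe l hl
    have e1 : Q (T (S (f l))) = 0 := by
      have := gd_apply_eq (gd_Qp hc hs) (f l)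
      simpa [hQ, ContinuousLinearMap.mul_apply, ContinuousLinearMap.zero_apply] using this
    have e2 : Q (v l) = T (S (T (f l))) - T (f l) := by
      rw [hv]
      simp only [map_sub, e1]
      rw [hQ]
      simp [ContinuousLinearMap.sub_apply, ContinuousLinearMap.mul_apply]
    have e3 : T (S x) = l • T (S (f l)) - T (S (T (f l))) := by
      rw [← he]
      simp [map_sub, map_smul]
    rw [hv]
    simp only [smul_sub]
    rw [e2, hn, e3, ← he]
    abel
  -- the entire function w
  set w : ℂ → X := fun z => z • (Ring.inverse ((1 : X →L[ℂ] X) + z • Q)) n with hw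
  have huz : ∀ z : ℂ, IsUnit ((1 : X →L[ℂ] X) + z • Q) := gd_isUnit_one_add_smul hq
  have claim2 : ∀ l ∈ U, l ≠ 0 → v l = w l⁻¹ := by
    intro l hl hl0
    have h1 := claim1 l hl
    have h2 : ((1 : X →L[ℂ] X) + l⁻¹ • Q) (v l) = l⁻¹ • n := by
      simp only [ContinuousLinearMap.add_apply, ContinuousLinearMap.one_apply,
        ContinuousLinearMap.smul_apply]
      rw [← h1, smul_add, smul_smul, inv_mul_cancel₀ hl0, one_smul]
    have h3 := gd_apply_eq (Ring.inverse_mul_cancel _ (huz l⁻¹)) (v l)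
    simp only [ContinuousLinearMap.mul_apply, ContinuousLinearMap.one_apply] at h3
    rw [h2] at h3
    have h4 : v l = (Ring.inverse ((1 : X →L[ℂ] X) + l⁻¹ • Q)) (l⁻¹ • n) := h3.symm
    simp only [hw]
    rw [h4, map_smul]
  have claim3 : Differentiable ℂ w := by
    intro z
    have h1 : DifferentiableAt ℂ (fun z : ℂ => Ring.inverse ((1 : X →L[ℂ] X) + z • Q)) z :=
      DifferentiableAt.comp (g := Ring.inverse) z (differentiableAt_inverse (𝕜 := ℂ) (huz z))
        ((differentiable_id.smul_const Q).const_add 1).differentiableAt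
    exact differentiableAt_id.smul (h1.clm_apply (differentiableAt_const n))
  obtain ⟨r, hr0, hrU⟩ : ∃ r > 0, Metric.closedBall (0 : ℂ) r ⊆ U := by
    obtain ⟨r, hr0, hrU⟩ := Metric.nhds_basis_closedBall.mem_iff.mp (hU.mem_nhds hU0)
    exact ⟨r, hr0, hrU⟩
  have hvcont : ContinuousOn v U := by
    have h1 := hf.continuousOn
    exact h1.sub (((T.comp S).continuous.comp_continuousOn h1))
  have hbdd : Bornology.IsBounded (range w) := by
    have hK1 : IsCompact (w '' Metric.closedBall 0 r⁻¹) :=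
      (isCompact_closedBall _ _).image claim3.continuous
    have hK2 : IsCompact (v '' Metric.closedBall 0 r) :=
      (isCompact_closedBall _ _).image_of_continuousOn (hvcont.mono hrU)
    apply (hK1.isBounded.union hK2.isBounded).subset
    rintro _ ⟨z, rfl⟩
    by_cases hz : z ∈ Metric.closedBall (0 : ℂ) r⁻¹
    · exact Or.inl (mem_image_of_mem w hz)
    · right
      rw [Metric.mem_closedBall, dist_zero_right, not_le] at hz
      have hzpos : 0 < ‖z‖ := lt_trans (inv_pos.mpr hr0) hz
      have hz0 : z ≠ 0 := by
        intro h
        rw [h, norm_zero] at hzpos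
        exact lt_irrefl _ hzpos
      have hmem : z⁻¹ ∈ Metric.closedBall (0 : ℂ) r := by
        rw [Metric.mem_closedBall, dist_zero_right, norm_inv]
        exact le_of_lt ((inv_lt_comm₀ hr0 hzpos).mp hz)
      have h2 := claim2 z⁻¹ (hrU hmem) (inv_ne_zero hz0)
      rw [inv_inv] at h2
      exact ⟨z⁻¹, hmem, h2⟩
  have hwz : ∀ z : ℂ, w z = 0 := by
    intro z
    have h1 := claim3.apply_eq_apply_of_bounded hbdd z 0
    rw [h1, hw]
    simp
  have hrC0 : ((r : ℂ)) ≠ 0 := by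
    simpa using ne_of_gt hr0
  have hrCU : ((r : ℂ)) ∈ U := by
    apply hrU
    rw [Metric.mem_closedBall, dist_zero_right]
    simp [abs_of_pos hr0, le_refl]
  have hvr : v (r : ℂ) = 0 := (claim2 _ hrCU hrC0).trans (hwz _)
  have h1 := claim1 _ hrCU
  rw [hvr, smul_zero, map_zero, add_zero] at h1
  have h2 : x - T (S x) = 0 := by rw [hn] at h1; exact h1.symm
  rw [sub_eq_zero] at h2
  exact h2.symm


lemma gd_isClosed_invSet {Ω : Set ℂ} (hΩ : IsClosed Ω) :
    IsClosed ({z : ℂ | z ≠ 0 ∧ z⁻¹ ∈ Ω} ∪ {0}) := by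
  rw [← isOpen_compl_iff]
  have h1 : ({z : ℂ | z ≠ 0 ∧ z⁻¹ ∈ Ω} ∪ {0})ᶜ = {(0 : ℂ)}ᶜ ∩ Inv.inv ⁻¹' Ωᶜ := by
    ext z
    simp only [Set.mem_compl_iff, Set.mem_union, Set.mem_setOf_eq, Set.mem_singleton_iff,
      Set.mem_inter_iff, Set.mem_preimage]
    tauto
  rw [h1]
  exact continuousOn_inv₀.isOpen_inter_preimage isOpen_compl_singleton hΩ.isOpen_compl

lemma gd_LA (hc : S * T = T * S) (hs : S * T * S = S) {x : X} {Ω : Set ℂ}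
    (hx : localSpectrum T x ⊆ Ω) :
    localSpectrum S x ⊆ {z : ℂ | z ≠ 0 ∧ z⁻¹ ∈ Ω} ∪ {0} := by
  intro l hl
  by_cases hl0 : l = 0
  · exact Or.inr (by simp [hl0])
  · left
    refine ⟨hl0, ?_⟩
    by_contra hmem
    have h2 : l⁻¹ ∈ localResolvent T x := by
      by_contra h3
      exact hmem (hx h3)
    have h4 := gd_inv_mem_S hc hs (inv_ne_zero hl0) h2
    rw [inv_inv] at h4
    exact hl h4

lemma gd_LB (hc : S * T = T * S) (hs : S * T * S = S)
    (hq : IsQuasinilpotent (T * S * T - T)) {x : X} {Ω : Set ℂ}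
    (hx : localSpectrum S x ⊆ Ω) :
    localSpectrum T x ⊆ {z : ℂ | z ≠ 0 ∧ z⁻¹ ∈ Ω} ∪ {0} := by
  intro l hl
  by_cases hl0 : l = 0
  · exact Or.inr (by simp [hl0])
  · left
    refine ⟨hl0, ?_⟩
    by_contra hmem
    have h2 : l⁻¹ ∈ localResolvent S x := by
      by_contra h3
      exact hmem (hx h3)
    have h4 := gd_inv_mem_T hc hs hq (inv_ne_zero hl0) h2
    rw [inv_inv] at h4
    exact hl h4

lemma gd_LC (hc : S * T = T * S) (hs : S * T * S = S) {x : X} {Ω : Set ℂ}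
    (h0 : (0 : ℂ) ∈ Ω ∨ T (S x) = x)
    (hx : localSpectrum T x ⊆ {z : ℂ | z ≠ 0 ∧ z⁻¹ ∈ Ω} ∪ {0}) :
    localSpectrum S x ⊆ Ω := by
  intro l hl
  by_cases hl0 : l = 0
  · rcases h0 with h0 | hfix
    · rw [hl0]; exact h0
    · exfalso
      have h2 := gd_zero_mem_S hc hs hfix
      rw [hl0] at hl
      exact hl h2
  · by_contra hmem
    have h2 : l⁻¹ ∈ localResolvent T x := by
      by_contra h3
      rcases hx h3 with ⟨_, h5⟩ | h6
      · rw [inv_inv] at h5; exact hmem h5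
      · exact (inv_ne_zero hl0) h6
    have h4 := gd_inv_mem_S hc hs (inv_ne_zero hl0) h2
    rw [inv_inv] at h4
    exact hl h4

lemma gd_LD (hc : S * T = T * S) (hs : S * T * S = S)
    (hq : IsQuasinilpotent (T * S * T - T)) {x : X} {Ω : Set ℂ}
    (h0 : (0 : ℂ) ∈ Ω ∨ T (S x) = x)
    (hx : localSpectrum S x ⊆ {z : ℂ | z ≠ 0 ∧ z⁻¹ ∈ Ω} ∪ {0}) :
    localSpectrum T x ⊆ Ω := by
  intro l hl
  by_cases hl0 : l = 0
  · rcases h0 with h0 | hfix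
    · rw [hl0]; exact h0
    · exfalso
      have h2 := gd_zero_mem_T hc hs hfix
      rw [hl0] at hl
      exact hl h2
  · by_contra hmem
    have h2 : l⁻¹ ∈ localResolvent S x := by
      by_contra h3
      rcases hx h3 with ⟨_, h5⟩ | h6
      · rw [inv_inv] at h5; exact hmem h5
      · exact (inv_ne_zero hl0) h6
    have h4 := gd_inv_mem_T hc hs hq (inv_ne_zero hl0) h2
    rw [inv_inv] at h4
    exact hl h4


end GDAux


/-- `T` has Dunford's property `(C)` iff its generalized Drazin inverse
`S` has property `(C)`. -/
theorem propertyC_iff_propertyC_gdInverse (T S : X →L[ℂ] X) (h : IsGDInverse T S) :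
    HasPropertyC T ↔ HasPropertyC S := by
  obtain ⟨hc, hs, hq⟩ := h
  have hfixclosed : IsClosed {x : X | T (S x) = x} :=
    isClosed_eq ((T.comp S).continuous) continuous_id
  constructor
  · intro hT Ω hΩ
    by_cases h0 : (0 : ℂ) ∈ Ω
    · have heq : localSpectralSubspace S Ω
          = localSpectralSubspace T ({z : ℂ | z ≠ 0 ∧ z⁻¹ ∈ Ω} ∪ {0}) := by
        ext x
        constructor
        · exact fun hx => gd_LB hc hs hq hx
        · exact fun hx => gd_LC hc hs (Or.inl h0) hx
      rw [heq]
      exact hT _ (gd_isClosed_invSet hΩ)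
    · have heq : localSpectralSubspace S Ω
          = localSpectralSubspace T ({z : ℂ | z ≠ 0 ∧ z⁻¹ ∈ Ω} ∪ {0})
            ∩ {x : X | T (S x) = x} := by
        ext x
        constructor
        · intro hx
          refine ⟨gd_LB hc hs hq hx, ?_⟩
          apply gd_pfix_of_zero_mem_S hc hs
          by_contra h3
          exact h0 (hx h3)
        · rintro ⟨hx, hfix⟩
          exact gd_LC hc hs (Or.inr hfix) hx
      rw [heq]
      exact (hT _ (gd_isClosed_invSet hΩ)).inter hfixclosed
  · intro hS Ω hΩ
    by_cases h0 : (0 : ℂ) ∈ Ω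
    · have heq : localSpectralSubspace T Ω
          = localSpectralSubspace S ({z : ℂ | z ≠ 0 ∧ z⁻¹ ∈ Ω} ∪ {0}) := by
        ext x
        constructor
        · exact fun hx => gd_LA hc hs hx
        · exact fun hx => gd_LD hc hs hq (Or.inl h0) hx
      rw [heq]
      exact hS _ (gd_isClosed_invSet hΩ)
    · have heq : localSpectralSubspace T Ω
          = localSpectralSubspace S ({z : ℂ | z ≠ 0 ∧ z⁻¹ ∈ Ω} ∪ {0})
            ∩ {x : X | T (S x) = x} := by
        ext x
        constructor
        · intro hx
          refine ⟨gd_LA hc hs hx, ?_⟩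
          apply gd_pfix_of_zero_mem_T hc hs hq
          by_contra h3
          exact h0 (hx h3)
        · rintro ⟨hx, hfix⟩
          exact gd_LD hc hs hq (Or.inr hfix) hx
      rw [heq]
      exact (hS _ (gd_isClosed_invSet hΩ)).inter hfixclosed


end Paper
end

section
/- Let X be a complex Banach space, T a bounded linear operator on X, and S a generalized Drazin inverse of T (i.e., ST = TS, STS = S, and TST − T is quasinilpotent). Then T has Bishop's property (β) if and only if S has Bishop's property (β). -/
open Filter Topology Set

namespace Paper

variable {Y : Type*} [NormedAddCommGroup Y] [NormedSpace ℂ Y]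

variable {X : Type*} [NormedAddCommGroup X] [NormedSpace ℂ X] [CompleteSpace X]

section Helpers

variable {X : Type*} [NormedAddCommGroup X] [NormedSpace ℂ X] [CompleteSpace X]

lemma tuo_zero_iff {f : ℕ → ℂ → X} {K : Set ℂ} :
    TendstoUniformlyOn f (fun _ => (0 : X)) atTop K ↔
      ∀ ε > 0, ∀ᶠ n in atTop, ∀ x ∈ K, ‖f n x‖ < ε := by
  rw [Metric.tendstoUniformlyOn_iff]
  simp only [dist_zero_left]

lemma tuo_zero_clm {f : ℕ → ℂ → X} {K : Set ℂ} (L : X →L[ℂ] X)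
    (h : TendstoUniformlyOn f (fun _ => (0 : X)) atTop K) :
    TendstoUniformlyOn (fun n x => L (f n x)) (fun _ => (0 : X)) atTop K := by
  rw [tuo_zero_iff] at h ⊢
  intro ε hε
  have hL : (0:ℝ) < ‖L‖ + 1 := by positivity
  filter_upwards [h (ε / (‖L‖ + 1)) (by positivity)] with n hn x hx
  calc ‖L (f n x)‖ ≤ ‖L‖ * ‖f n x‖ := L.le_opNorm _
    _ ≤ (‖L‖ + 1) * ‖f n x‖ := by nlinarith [norm_nonneg (f n x)]
    _ < (‖L‖ + 1) * (ε / (‖L‖ + 1)) := by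
        exact (mul_lt_mul_iff_right₀ hL).mpr (hn x hx)
    _ = ε := by field_simp

lemma isQuasinilpotent_zero : IsQuasinilpotent (0 : X →L[ℂ] X) := by
  unfold IsQuasinilpotent
  have : ∀ᶠ n : ℕ in atTop, ‖(0 : X →L[ℂ] X) ^ n‖ ^ (1 / (n : ℝ)) = 0 := by
    filter_upwards [eventually_ge_atTop 1] with n hn
    rw [zero_pow (by omega), norm_zero]
    exact Real.zero_rpow (by positivity)
  exact Tendsto.congr' (this.mono fun n hn => hn.symm) tendsto_const_nhds

lemma IsQuasinilpotent.neg {Q : X →L[ℂ] X} (h : IsQuasinilpotent Q) :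
    IsQuasinilpotent (-Q) := by
  unfold IsQuasinilpotent at h ⊢
  convert h using 2 with n
  rw [neg_pow]
  rcases neg_one_pow_eq_or (X →L[ℂ] X) n with h1 | h1 <;> rw [h1] <;> simp

lemma IsQuasinilpotent.isUnit {Q : X →L[ℂ] X} (h : IsQuasinilpotent Q) {l : ℂ} (hl : l ≠ 0) :
    IsUnit (l • (1 : X →L[ℂ] X) - Q) := by
  have hsr : spectralRadius ℂ Q = 0 := by
    have h1 : Tendsto (fun n : ℕ => ENNReal.ofReal (‖Q ^ n‖ ^ (1 / n : ℝ))) atTop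
        (𝓝 (spectralRadius ℂ Q)) := spectrum.pow_norm_pow_one_div_tendsto_nhds_spectralRadius Q
    have h2 : Tendsto (fun n : ℕ => ENNReal.ofReal (‖Q ^ n‖ ^ (1 / n : ℝ))) atTop (𝓝 0) := by
      simpa using ENNReal.tendsto_ofReal h
    exact tendsto_nhds_unique h1 h2
  by_contra hu
  have hmem : l ∈ spectrum ℂ Q := by
    rw [spectrum.mem_iff, Algebra.algebraMap_eq_smul_one]
    exact hu
  have : (‖l‖₊ : ENNReal) ≤ spectralRadius ℂ Q := le_iSup₂ (f := fun k (_ : k ∈ spectrum ℂ Q) => (‖k‖₊ : ENNReal)) l hmem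
  rw [hsr, nonpos_iff_eq_zero] at this
  simp only [ENNReal.coe_eq_zero, nnnorm_eq_zero] at this
  exact hl this

end Helpers
section Helpers2

variable {X : Type*} [NormedAddCommGroup X] [NormedSpace ℂ X] [CompleteSpace X]

lemma cross_zero {U : Set ℂ} (hU : IsOpen U) {f : ℕ → ℂ → X}
    (hf : ∀ n, AnalyticOnNhd ℂ (f n) U)
    (h : ∀ K : Set ℂ, K ⊆ U → IsCompact K → (0:ℂ) ∉ K →
      TendstoUniformlyOn (fun n l => f n l) (fun _ => (0:X)) atTop K) :
    ∀ K : Set ℂ, K ⊆ U → IsCompact K →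
      TendstoUniformlyOn (fun n l => f n l) (fun _ => (0:X)) atTop K := by
  intro K hKU hK
  by_cases h0 : (0:ℂ) ∈ U
  · obtain ⟨ε, hε, hball⟩ := Metric.isOpen_iff.mp hU 0 h0
    set r := ε / 2 with hr
    have hrpos : 0 < r := by positivity
    have hcb : Metric.closedBall (0:ℂ) r ⊆ U := by
      refine subset_trans ?_ hball
      intro z hz
      simp only [Metric.mem_closedBall] at hz
      simp only [Metric.mem_ball]
      linarith
    set K' := (K \ Metric.ball (0:ℂ) r) ∪ Metric.sphere (0:ℂ) r with hK'def
    have hK'c : IsCompact K' := (hK.diff Metric.isOpen_ball).union (isCompact_sphere 0 r)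
    have hK'U : K' ⊆ U := by
      rintro z (⟨hz, -⟩ | hz)
      · exact hKU hz
      · exact hcb (Metric.sphere_subset_closedBall hz)
    have h0K' : (0:ℂ) ∉ K' := by
      rintro (⟨-, hz⟩ | hz)
      · exact hz (Metric.mem_ball_self hrpos)
      · simp only [Metric.mem_sphere, dist_self] at hz
        exact hrpos.ne hz
    have hK' := h K' hK'U hK'c h0K'
    rw [tuo_zero_iff] at hK' ⊢
    intro δ hδ
    filter_upwards [hK' (δ/2) (by positivity)] with n hn x hx
    by_cases hxb : x ∈ Metric.ball (0:ℂ) r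
    · have hd : DiffContOnCl ℂ (f n) (Metric.ball (0:ℂ) r) := by
        refine DiffContOnCl.mk (((hf n).differentiableOn).mono ?_) (((hf n).continuousOn).mono ?_)
        · exact subset_trans Metric.ball_subset_closedBall hcb
        · rw [closure_ball (0:ℂ) hrpos.ne']
          exact hcb
      have hmax : ‖f n x‖ ≤ δ/2 := by
        refine Complex.norm_le_of_forall_mem_frontier_norm_le Metric.isBounded_ball hd ?_ ?_
        · intro z hz
          rw [frontier_ball (0:ℂ) hrpos.ne'] at hz
          exact (hn z (Or.inr hz)).le
        · rw [closure_ball (0:ℂ) hrpos.ne']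
          exact Metric.ball_subset_closedBall hxb
      linarith
    · exact lt_trans (hn x (Or.inl ⟨hx, hxb⟩)) (by linarith)
  · exact h K hKU hK (fun hx => h0 (hKU hx))

end Helpers2
section Helpers3

variable {X : Type*} [NormedAddCommGroup X] [NormedSpace ℂ X] [CompleteSpace X]

lemma IsQuasinilpotent.hasPropertyBeta {Q : X →L[ℂ] X} (hQ : IsQuasinilpotent Q) :
    HasPropertyBeta Q := by
  intro U hU f hf hconv
  refine cross_zero hU hf ?_
  intro K hKU hK h0K
  set F : ℂ → (X →L[ℂ] X) := fun l => Ring.inverse (l • (1 : X →L[ℂ] X) - Q) with hF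
  have hcont : ContinuousOn F K := by
    intro l hl
    have hl0 : l ≠ 0 := fun h => h0K (h ▸ hl)
    have hu : IsUnit (l • (1 : X →L[ℂ] X) - Q) := hQ.isUnit hl0
    have h1 : ContinuousAt (fun l : ℂ => l • (1 : X →L[ℂ] X) - Q) l :=
      ((continuous_id.smul continuous_const).sub continuous_const).continuousAt
    have h2 : ContinuousAt (Ring.inverse : (X →L[ℂ] X) → (X →L[ℂ] X))
        (l • (1 : X →L[ℂ] X) - Q) := by
      have := NormedRing.inverse_continuousAt hu.unit
      rwa [hu.unit_spec] at this
    have h3 : ContinuousAt (fun l : ℂ => Ring.inverse (l • (1 : X →L[ℂ] X) - Q)) l :=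
      ContinuousAt.comp (g := (Ring.inverse : (X →L[ℂ] X) → (X →L[ℂ] X)))
        (f := fun l : ℂ => l • (1 : X →L[ℂ] X) - Q) h2 h1
    exact h3.continuousWithinAt
  obtain ⟨C, hC⟩ := hK.exists_bound_of_continuousOn hcont
  set C' : ℝ := max C 0 + 1 with hC'
  have hC'pos : 0 < C' := by positivity
  have hFC' : ∀ x ∈ K, ‖F x‖ ≤ C' := fun x hx =>
    (hC x hx).trans (by simp [hC']; linarith [le_max_left C 0])
  rw [tuo_zero_iff]
  intro ε hε
  have := hconv K hKU hK
  rw [tuo_zero_iff] at this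
  filter_upwards [this (ε / C') (by positivity)] with n hn x hx
  have hx0 : x ≠ 0 := fun h => h0K (h ▸ hx)
  have hu : IsUnit (x • (1 : X →L[ℂ] X) - Q) := hQ.isUnit hx0
  have key : f n x = F x (x • f n x - Q (f n x)) := by
    have h1 : F x * (x • (1 : X →L[ℂ] X) - Q) = 1 := Ring.inverse_mul_cancel _ hu
    have h2 : (x • (1 : X →L[ℂ] X) - Q) (f n x) = x • f n x - Q (f n x) := by
      simp [ContinuousLinearMap.sub_apply, ContinuousLinearMap.smul_apply]
    rw [← h2, ← ContinuousLinearMap.comp_apply, ← ContinuousLinearMap.mul_def, h1,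
      ContinuousLinearMap.one_apply]
  calc ‖f n x‖ = ‖F x (x • f n x - Q (f n x))‖ := by rw [← key]
    _ ≤ ‖F x‖ * ‖x • f n x - Q (f n x)‖ := (F x).le_opNorm _
    _ ≤ C' * ‖x • f n x - Q (f n x)‖ :=
        mul_le_mul_of_nonneg_right (hFC' x hx) (norm_nonneg _)
    _ < C' * (ε / C') := by exact (mul_lt_mul_iff_right₀ hC'pos).mpr (hn x hx)
    _ = ε := by field_simp

end Helpers3
section Helpers4

variable {X : Type*} [NormedAddCommGroup X] [NormedSpace ℂ X] [CompleteSpace X]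

lemma beta_inv_transfer {A : X →L[ℂ] X} (hA : HasPropertyBeta A) {U : Set ℂ} (hU : IsOpen U)
    {w : ℕ → ℂ → X} (hw : ∀ n, AnalyticOnNhd ℂ (w n) U)
    (h : ∀ K : Set ℂ, K ⊆ U → IsCompact K →
      TendstoUniformlyOn (fun n l => l • A (w n l) - w n l) (fun _ => (0:X)) atTop K) :
    ∀ K : Set ℂ, K ⊆ U → IsCompact K → (0:ℂ) ∉ K →
      TendstoUniformlyOn (fun n l => w n l) (fun _ => (0:X)) atTop K := by
  set V : Set ℂ := {μ : ℂ | μ ≠ 0 ∧ μ⁻¹ ∈ U} with hV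
  have hVopen : IsOpen V := by
    rw [isOpen_iff_mem_nhds]
    rintro μ ⟨hμ0, hμU⟩
    have h1 : {ν : ℂ | ν ≠ 0} ∈ 𝓝 μ := (isOpen_compl_singleton).mem_nhds hμ0
    have h2 : (fun ν : ℂ => ν⁻¹) ⁻¹' U ∈ 𝓝 μ := (continuousAt_inv₀ hμ0) (hU.mem_nhds hμU)
    filter_upwards [h1, h2] with ν hν1 hν2
    exact ⟨hν1, hν2⟩
  set g : ℕ → ℂ → X := fun n μ => w n μ⁻¹ with hg
  have hganal : ∀ n, AnalyticOnNhd ℂ (g n) V := by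
    intro n μ hμ
    exact (hw n μ⁻¹ hμ.2).comp (analyticOnNhd_inv μ hμ.1)
  have hconvV : ∀ K : Set ℂ, K ⊆ V → IsCompact K →
      TendstoUniformlyOn (fun n μ => μ • g n μ - A (g n μ)) (fun _ => (0:X)) atTop K := by
    intro K hKV hKc
    have hK' : IsCompact ((fun μ : ℂ => μ⁻¹) '' K) := by
      refine hKc.image_of_continuousOn ?_
      intro μ hμ
      exact (continuousAt_inv₀ (hKV hμ).1).continuousWithinAt
    have hK'U : (fun μ : ℂ => μ⁻¹) '' K ⊆ U := by
      rintro x ⟨μ, hμ, rfl⟩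
      exact (hKV hμ).2
    obtain ⟨C, hC⟩ := hKc.exists_bound_of_continuousOn continuousOn_id
    set M : ℝ := max C 0 + 1 with hM
    have hMpos : 0 < M := by positivity
    have hMb : ∀ μ ∈ K, ‖μ‖ ≤ M := fun μ hμ => by
      have := hC μ hμ
      simp only [id_eq] at this
      simp only [hM]
      linarith [le_max_left C 0]
    rw [tuo_zero_iff]
    intro ε hε
    have := h _ hK'U hK'
    rw [tuo_zero_iff] at this
    filter_upwards [this (ε / M) (by positivity)] with n hn μ hμ
    have hμ0 : μ ≠ 0 := (hKV hμ).1
    have key : μ • g n μ - A (g n μ) = -(μ • (μ⁻¹ • A (w n μ⁻¹) - w n μ⁻¹)) := by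
      simp only [hg, smul_sub, smul_smul, mul_inv_cancel₀ hμ0, one_smul, neg_sub]
    rw [key, norm_neg, norm_smul]
    calc ‖μ‖ * ‖μ⁻¹ • A (w n μ⁻¹) - w n μ⁻¹‖ ≤ M * ‖μ⁻¹ • A (w n μ⁻¹) - w n μ⁻¹‖ :=
          mul_le_mul_of_nonneg_right (hMb μ hμ) (norm_nonneg _)
      _ < M * (ε / M) := by
          refine (mul_lt_mul_iff_right₀ hMpos).mpr ?_
          exact hn μ⁻¹ ⟨μ, hμ, rfl⟩
      _ = ε := by field_simp
  have hgconv := hA V hVopen g hganal hconvV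
  intro K hKU hKc h0K
  have hKV : (fun l : ℂ => l⁻¹) '' K ⊆ V := by
    rintro x ⟨l, hl, rfl⟩
    have hl0 : l ≠ 0 := by intro hh; subst hh; exact h0K hl
    exact ⟨inv_ne_zero hl0, by rw [inv_inv]; exact hKU hl⟩
  have hKc' : IsCompact ((fun l : ℂ => l⁻¹) '' K) := by
    refine hKc.image_of_continuousOn ?_
    intro l hl
    exact (continuousAt_inv₀ (fun hh => h0K (hh ▸ hl))).continuousWithinAt
  have := hgconv _ hKV hKc'
  rw [tuo_zero_iff] at this ⊢
  intro ε hε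
  filter_upwards [this ε hε] with n hn l hl
  have hl0 : l ≠ 0 := fun hh => h0K (hh ▸ hl)
  have := hn l⁻¹ ⟨l, hl, rfl⟩
  simpa [hg, inv_inv] using this

end Helpers4
section Main

variable {X : Type*} [NormedAddCommGroup X] [NormedSpace ℂ X] [CompleteSpace X]

lemma tuo_zero_add {f g : ℕ → ℂ → X} {K : Set ℂ}
    (hf : TendstoUniformlyOn f (fun _ => (0:X)) atTop K)
    (hg : TendstoUniformlyOn g (fun _ => (0:X)) atTop K) :
    TendstoUniformlyOn (fun n x => f n x + g n x) (fun _ => (0:X)) atTop K := by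
  rw [tuo_zero_iff] at hf hg ⊢
  intro ε hε
  filter_upwards [hf (ε/2) (by positivity), hg (ε/2) (by positivity)] with n h1 h2 x hx
  calc ‖f n x + g n x‖ ≤ ‖f n x‖ + ‖g n x‖ := norm_add_le _ _
    _ < ε := by linarith [h1 x hx, h2 x hx]

lemma beta_transfer {A B : X →L[ℂ] X} (hc : A * B = B * A)
    (hE : A * A * B * B = A * B)
    (hQ : IsQuasinilpotent (B - A * B * B))
    (hA : HasPropertyBeta A) : HasPropertyBeta B := by
  set E : X →L[ℂ] X := A * B with hEdef
  set P : X →L[ℂ] X := 1 - E with hPdef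
  set Q : X →L[ℂ] X := B - A * B * B with hQdef
  have hPB : P * B = Q := by
    rw [hPdef, sub_mul, one_mul, hEdef, hQdef, mul_assoc]
  have hABB : A * B * B = E * B := by rw [hEdef]
  have hQE : Q * E = 0 := by
    have h1 : B * E = A * B * B := by
      rw [hEdef, ← mul_assoc, ← hc, mul_assoc]
    have h2 : A * B * B * E = A * B * B := by
      calc A * B * B * (A * B) = A * B * (B * A) * B := by
            rw [mul_assoc (A*B) B (A*B), ← mul_assoc B A B, ← mul_assoc]
        _ = A * B * (A * B) * B := by rw [← hc]
        _ = A * (B * A) * B * B := by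
            rw [mul_assoc A B (A*B), ← mul_assoc B A B, ← mul_assoc, ← mul_assoc]
        _ = A * (A * B) * B * B := by rw [← hc]
        _ = A * A * B * B * B := by rw [← mul_assoc]
        _ = A * B * B := by rw [hE]
    rw [hQdef, sub_mul, h1, h2, sub_self]
  have hAEB : A * E * B = E := by
    rw [hEdef, ← mul_assoc, hE]
  have hPplusE : P + E = 1 := by rw [hPdef]; exact sub_add_cancel 1 E
  intro U hU f hf hconv
  set pf : ℕ → ℂ → X := fun n l => P (f n l) with hpf
  set ef : ℕ → ℂ → X := fun n l => E (f n l) with hef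
  have hpfa : ∀ n, AnalyticOnNhd ℂ (pf n) U := fun n z hz =>
    (P.analyticAt _).comp (hf n z hz)
  have hefa : ∀ n, AnalyticOnNhd ℂ (ef n) U := fun n z hz =>
    (E.analyticAt _).comp (hf n z hz)
  -- the P-component tends to zero, via quasinilpotence of Q
  have hvec1 : ∀ (l : ℂ) (v : X), l • P v - Q (P v) = P (l • v - B v) := by
    intro l v
    have h1 : P (l • v - B v) = l • P v - (P * B) v := by
      rw [map_sub, map_smul, ContinuousLinearMap.mul_apply]
    have h2 : Q (P v) = Q v := by
      have hvP : v - P v = E v := by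
        rw [hPdef]
        simp [ContinuousLinearMap.sub_apply]
      have h3 : Q (v - P v) = 0 := by
        rw [hvP, ← ContinuousLinearMap.mul_apply, hQE, ContinuousLinearMap.zero_apply]
      rw [map_sub] at h3
      exact (sub_eq_zero.mp h3).symm
    rw [h1, hPB, h2]
  have hPconv : ∀ K : Set ℂ, K ⊆ U → IsCompact K →
      TendstoUniformlyOn (fun n l => pf n l) (fun _ => (0:X)) atTop K := by
    refine hQ.hasPropertyBeta U hU pf hpfa ?_
    intro K hKU hK
    have := tuo_zero_clm P (hconv K hKU hK)
    refine this.congr ?_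
    filter_upwards with n
    intro l hl
    exact (hvec1 l (f n l)).symm
  -- the E-component tends to zero, via property beta of A
  have hvec2 : ∀ (l : ℂ) (v : X), l • A (E v) - E v = (A * E) (l • v - B v) := by
    intro l v
    rw [map_sub, map_smul, ContinuousLinearMap.mul_apply,
      ← ContinuousLinearMap.mul_apply (A * E) B, hAEB]
    simp [hEdef, ContinuousLinearMap.mul_apply]
  have hEconv0 : ∀ K : Set ℂ, K ⊆ U → IsCompact K → (0:ℂ) ∉ K →
      TendstoUniformlyOn (fun n l => ef n l) (fun _ => (0:X)) atTop K := by
    refine beta_inv_transfer hA hU hefa ?_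
    intro K hKU hK
    have := tuo_zero_clm (A * E) (hconv K hKU hK)
    refine this.congr ?_
    filter_upwards with n
    intro l hl
    exact (hvec2 l (f n l)).symm
  have hEconv : ∀ K : Set ℂ, K ⊆ U → IsCompact K →
      TendstoUniformlyOn (fun n l => ef n l) (fun _ => (0:X)) atTop K :=
    cross_zero hU hefa hEconv0
  -- combine
  intro K hKU hK
  have := tuo_zero_add (hPconv K hKU hK) (hEconv K hKU hK)
  refine this.congr ?_
  filter_upwards with n
  intro l hl
  show pf n l + ef n l = f n l
  rw [hpf, hef]
  calc P (f n l) + E (f n l) = (P + E) (f n l) := by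
        rw [ContinuousLinearMap.add_apply]
    _ = f n l := by rw [hPplusE, ContinuousLinearMap.one_apply]

end Main
/-- `T` has Bishop's property `(β)` iff its generalized Drazin inverse
`S` has property `(β)`. -/
theorem propertyBeta_iff_propertyBeta_gdInverse (T S : X →L[ℂ] X) (h : IsGDInverse T S) :
    HasPropertyBeta T ↔ HasPropertyBeta S := by
  obtain ⟨hc, hsts, hq⟩ := h
  have hTSS : T * S * S = S := by rw [← hc]; exact hsts
  constructor
  · intro hT
    refine beta_transfer (A := T) (B := S) hc.symm ?_ ?_ hT
    · rw [mul_assoc T T S, mul_assoc, hTSS]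
    · rw [hTSS]
      simpa using isQuasinilpotent_zero
  · intro hS
    refine beta_transfer (A := S) (B := T) hc ?_ ?_ hS
    · calc S*S*T*T = S*(S*T)*T := by rw [mul_assoc S S T]
        _ = S*(T*S)*T := by rw [hc]
        _ = S*T*S*T := by rw [← mul_assoc]
        _ = S*T := by rw [hsts]
    · have hSTT : S * T * T = T * S * T := by rw [hc]
      rw [hSTT, ← neg_sub]
      exact hq.neg

end Paper
end
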